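/- arXiv:2003.11287 — 4 statements merged into one kernel-verified Lean document; each statement's English description precedes it below -/
import Mathlib

section
/- Let A be a d×d integer matrix whose characteristic polynomial p is irreducible over ℚ, with eigenvalues θ₁, …, θ_d (over ℂ). If for some n ∈ ℕ one has θ₁ⁿ ≠ θⱼⁿ for all j > 1, then the characteristic polynomial of Aⁿ is irreducible over ℚ. -/
open Polynomial

section helpers

variable {d : ℕ} {𝕜 : Type*} [Field 𝕜]

lemma aux_eval_charpoly (M : Matrix (Fin d) (Fin d) 𝕜) (μ : 𝕜) :
    (Matrix.charpoly M).eval μ = (μ • (1 : Matrix (Fin d) (Fin d) 𝕜) - M).det := by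
  rw [Matrix.charpoly, ← Polynomial.coe_evalRingHom, RingHom.map_det]
  congr 1
  ext i j
  by_cases h : i = j <;>
    simp [h, Matrix.charmatrix_apply, Matrix.one_apply, Matrix.diagonal_apply]

lemma aux_root_pow (M : Matrix (Fin d) (Fin d) 𝕜) (μ : 𝕜)
    (h : (Matrix.charpoly M).eval μ = 0) (n : ℕ) :
    (Matrix.charpoly (M ^ n)).eval (μ ^ n) = 0 := by
  rw [aux_eval_charpoly] at h
  obtain ⟨v, hv0, hMv⟩ := (Matrix.exists_mulVec_eq_zero_iff).mpr h
  have hMv' : M.mulVec v = μ • v := by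
    rw [Matrix.sub_mulVec, Matrix.smul_mulVec, Matrix.one_mulVec, sub_eq_zero] at hMv
    exact hMv.symm
  have key : ∀ k : ℕ, (M ^ k).mulVec v = μ ^ k • v := by
    intro k
    induction k with
    | zero => simp [Matrix.one_mulVec]
    | succ k ih =>
        rw [pow_succ', pow_succ', ← Matrix.mulVec_mulVec, ih, Matrix.mulVec_smul, hMv',
          smul_smul, mul_comm]
  rw [aux_eval_charpoly]
  exact (Matrix.exists_mulVec_eq_zero_iff).mp ⟨v, hv0, by rw [Matrix.sub_mulVec, Matrix.smul_mulVec, Matrix.one_mulVec,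
    key n, sub_self]⟩

lemma aux_monic_dvd_eq {p q : ℚ[X]} (hp : p.Monic) (hq : q.Monic) (h : p ∣ q)
    (hdeg : q.natDegree ≤ p.natDegree) : p = q := by
  obtain ⟨c, rfl⟩ := h
  have hc : c ≠ 0 := by
    rintro rfl
    simp only [mul_zero] at hq
    exact hq.ne_zero rfl
  have hdc : c.natDegree = 0 := by
    have h1 := Polynomial.natDegree_mul hp.ne_zero hc
    omega
  obtain ⟨a, rfl⟩ := Polynomial.natDegree_eq_zero.mp hdc
  have ha : a = 1 := by
    have h2 := hq
    rw [Polynomial.Monic, Polynomial.leadingCoeff_mul, hp.leadingCoeff, one_mul,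
      Polynomial.leadingCoeff_C] at h2
    exact h2
  rw [ha, map_one, mul_one]

end helpers

set_option maxHeartbeats 1000000 in
set_option synthInstance.maxHeartbeats 400000 in
theorem stmt0 (d : ℕ) (hd : 1 ≤ d) (A : Matrix (Fin d) (Fin d) ℤ)
    (hirr : Irreducible ((Matrix.charpoly A).map (Int.castRingHom ℚ)))
    (θ : Fin d → ℂ)
    (hfact : (Matrix.charpoly A).map (Int.castRingHom ℂ) =
      ∏ j : Fin d, (X - C (θ j)))
    (n : ℕ)
    (hn : ∀ j : Fin d, j ≠ ⟨0, hd⟩ → θ ⟨0, hd⟩ ^ n ≠ θ j ^ n) :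
    Irreducible ((Matrix.charpoly (A ^ n)).map (Int.castRingHom ℚ)) := by
  classical
  open IntermediateField in
  set p : ℚ[X] := (Matrix.charpoly A).map (Int.castRingHom ℚ) with hp_def
  set θ₀ : ℂ := θ ⟨0, hd⟩ with hθ₀_def
  have hcomp : (algebraMap ℚ ℂ).comp (Int.castRingHom ℚ) = Int.castRingHom ℂ := by
    exact RingHom.ext_int _ _
  have hpC : p.map (algebraMap ℚ ℂ) = (Matrix.charpoly A).map (Int.castRingHom ℂ) := by
    rw [hp_def, Polynomial.map_map, hcomp]
  have hp_monic : p.Monic := (Matrix.charpoly_monic A).map _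
  have hp_deg : p.natDegree = d := by
    rw [hp_def, (Matrix.charpoly_monic A).natDegree_map,
      Matrix.charpoly_natDegree_eq_dim, Fintype.card_fin]
  have haeval : (aeval θ₀) p = 0 := by
    rw [aeval_def, ← Polynomial.eval_map, hpC, hfact, Polynomial.eval_prod]
    exact Finset.prod_eq_zero (Finset.mem_univ ⟨0, hd⟩) (by simp [hθ₀_def])
  have hroots : ∀ z : ℂ, (aeval z) p = 0 → ∃ j, θ j = z := by
    intro z hz
    rw [aeval_def, ← Polynomial.eval_map, hpC, hfact, Polynomial.eval_prod] at hz
    obtain ⟨j, _, hj⟩ := Finset.prod_eq_zero_iff.mp hz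
    simp only [Polynomial.eval_sub, Polynomial.eval_X, Polynomial.eval_C, sub_eq_zero] at hj
    exact ⟨j, hj.symm⟩
  have hθinj : Function.Injective θ := by
    have hsep : (∏ j : Fin d, (X - C (θ j))).Separable := by
      rw [← hfact, ← hpC]
      exact hirr.separable.map
    exact Polynomial.separable_prod_X_sub_C_iff.mp hsep
  have hmin : minpoly ℚ θ₀ = p := (minpoly.eq_of_irreducible_of_monic hirr haeval hp_monic).symm
  have hint : IsIntegral ℚ θ₀ := ⟨p, hp_monic, by rw [← aeval_def]; exact haeval⟩
  have hintn : IsIntegral ℚ (θ₀ ^ n) := hint.pow n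
  -- The main degree claim
  have hm : (minpoly ℚ (θ₀ ^ n)).natDegree = d := by
    by_cases hmem : θ₀ ∈ ℚ⟮θ₀ ^ n⟯
    · have hFeq : ℚ⟮θ₀ ^ n⟯ = ℚ⟮θ₀⟯ := by
        apply le_antisymm
        · exact adjoin_simple_le_iff.mpr (pow_mem (mem_adjoin_simple_self ℚ θ₀) n)
        · exact adjoin_simple_le_iff.mpr hmem
      have h1 := IntermediateField.adjoin.finrank hintn
      have h2 := IntermediateField.adjoin.finrank hint
      rw [hFeq] at h1
      rw [hmin, hp_deg] at h2
      rw [← h1, h2]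
    · exfalso
      set F : IntermediateField ℚ ℂ := ℚ⟮θ₀ ^ n⟯ with hF_def
      have hθ₀F : IsIntegral F θ₀ := hint.tower_top
      haveI : FiniteDimensional F F⟮θ₀⟯ := IntermediateField.adjoin.finiteDimensional hθ₀F
      haveI : Algebra.IsAlgebraic F F⟮θ₀⟯ := Algebra.IsAlgebraic.of_finite F _
      haveI : Algebra.IsSeparable F F⟮θ₀⟯ :=
        Algebra.IsAlgebraic.isSeparable_of_perfectField
      have hcard : 1 < Fintype.card (F⟮θ₀⟯ →ₐ[F] ℂ) := by
        rw [AlgHom.card]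
        rw [IntermediateField.adjoin.finrank hθ₀F]
        refine lt_of_lt_of_le one_lt_two ?_
        rw [minpoly.two_le_natDegree_iff hθ₀F]
        rintro ⟨y, hy⟩
        exact hmem (hy ▸ y.2)
      obtain ⟨σ, τ, hστ⟩ := Fintype.exists_pair_of_one_lt_card hcard
      set gen : F⟮θ₀⟯ := IntermediateField.AdjoinSimple.gen F θ₀ with hgen_def
      have hdvd : minpoly F θ₀ ∣ p.map (algebraMap ℚ F) :=
        minpoly.dvd F θ₀ (by rw [Polynomial.aeval_map_algebraMap]; exact haeval)
      have hroot : ∀ ρ : F⟮θ₀⟯ →ₐ[F] ℂ, ∃ j, θ j = ρ gen := by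
        intro ρ
        apply hroots
        have h0 : (aeval gen) (minpoly F θ₀) = 0 := by
          rw [← IntermediateField.minpoly_gen F θ₀]
          exact minpoly.aeval F gen
        have h1 : (aeval (ρ gen)) (minpoly F θ₀) = 0 := by
          rw [Polynomial.aeval_algHom_apply, h0, map_zero]
        obtain ⟨c, hc⟩ := hdvd
        have h2 : (aeval (ρ gen)) (p.map (algebraMap ℚ F)) = 0 := by
          rw [hc, map_mul, h1, zero_mul]
        rwa [Polynomial.aeval_map_algebraMap] at h2
      have hxF : θ₀ ^ n ∈ F := mem_adjoin_simple_self ℚ (θ₀ ^ n)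
      have hgen_pow : gen ^ n = algebraMap F F⟮θ₀⟯ ⟨θ₀ ^ n, hxF⟩ := by
        apply Subtype.ext
        push_cast
        rfl
      have hfix : ∀ ρ : F⟮θ₀⟯ →ₐ[F] ℂ, (ρ gen) ^ n = θ₀ ^ n := by
        intro ρ
        rw [← map_pow, hgen_pow, AlgHom.commutes]
        rfl
      have hne : σ gen ≠ τ gen := by
        intro h
        apply hστ
        have hpb : (IntermediateField.adjoin.powerBasis hθ₀F).gen = gen :=
          IntermediateField.adjoin.powerBasis_gen hθ₀F
        exact PowerBasis.algHom_ext (IntermediateField.adjoin.powerBasis hθ₀F) (by rw [hpb]; exact h)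
      obtain ⟨j, hj⟩ := hroot σ
      obtain ⟨k, hk⟩ := hroot τ
      have hjk : j ≠ k := by
        intro h
        exact hne (by rw [← hj, ← hk, h])
      by_cases hj0 : j = ⟨0, hd⟩
      · have hk0 : k ≠ ⟨0, hd⟩ := by rw [hj0] at hjk; exact fun h => hjk h.symm
        exact hn k hk0 (by rw [hk]; exact (hfix τ).symm)
      · exact hn j hj0 (by rw [hj]; exact (hfix σ).symm)
  -- conclude
  set p' : ℚ[X] := (Matrix.charpoly (A ^ n)).map (Int.castRingHom ℚ) with hp'_def
  have hp'C : p'.map (algebraMap ℚ ℂ) = (Matrix.charpoly (A ^ n)).map (Int.castRingHom ℂ) := by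
    rw [hp'_def, Polynomial.map_map, hcomp]
  have hp'_monic : p'.Monic := (Matrix.charpoly_monic _).map _
  have hp'_deg : p'.natDegree = d := by
    rw [hp'_def, (Matrix.charpoly_monic _).natDegree_map,
      Matrix.charpoly_natDegree_eq_dim, Fintype.card_fin]
  have haeval' : (aeval (θ₀ ^ n)) p' = 0 := by
    have hmapB : (A ^ n).map (Int.castRingHom ℂ) = (A.map (Int.castRingHom ℂ)) ^ n := by
      simp only [← RingHom.mapMatrix_apply, map_pow]
    have hB : (Matrix.charpoly (A.map (Int.castRingHom ℂ))).eval θ₀ = 0 := by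
      rw [Matrix.charpoly_map, hfact, Polynomial.eval_prod]
      exact Finset.prod_eq_zero (Finset.mem_univ ⟨0, hd⟩) (by simp [hθ₀_def])
    have := aux_root_pow _ _ hB n
    rw [← hmapB, Matrix.charpoly_map] at this
    rw [aeval_def, ← Polynomial.eval_map, hp'C]
    exact this
  have hdvd' : minpoly ℚ (θ₀ ^ n) ∣ p' := minpoly.dvd ℚ _ haeval'
  have heq : minpoly ℚ (θ₀ ^ n) = p' :=
    aux_monic_dvd_eq (minpoly.monic hintn) hp'_monic hdvd' (by rw [hm, hp'_deg])
  rw [← heq]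
  exact minpoly.irreducible hintn
end

section
/- If A is a primitive nonnegative integer d×d matrix (some power of A has all entries strictly positive) with irreducible characteristic polynomial, then for every n ≥ 1 the characteristic polynomial of Aⁿ is irreducible over ℚ. -/
open Polynomial Matrix Finset


private lemma powNonneg' {d : ℕ} (A : Matrix (Fin d) (Fin d) ℤ)
    (h : ∀ i j, 0 ≤ A i j) : ∀ m i j, 0 ≤ (A ^ m) i j := by
  intro m
  induction m with
  | zero => intro i j; by_cases hij : i = j <;> simp [Matrix.one_apply, hij]
  | succ m ih =>
    intro i j
    rw [pow_succ, Matrix.mul_apply]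
    exact Finset.sum_nonneg fun l _ => mul_nonneg (ih i l) (h l j)

private lemma powOneLe' {d : ℕ} (A : Matrix (Fin d) (Fin d) ℤ)
    (h0 : ∀ i j, 0 ≤ A i j) {k : ℕ} (hk : 1 ≤ k) (hpos : ∀ i j, 0 < (A ^ k) i j) :
    ∀ m, k ≤ m → ∀ i j, 1 ≤ (A ^ m) i j := by
  have hcol : ∀ j, ∃ l, 1 ≤ A l j := by
    intro j
    by_contra hc
    push_neg at hc
    obtain ⟨k', rfl⟩ : ∃ k', k = k' + 1 := ⟨k - 1, by omega⟩
    have h1 := hpos j j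
    rw [pow_succ, Matrix.mul_apply] at h1
    have : ∀ l ∈ Finset.univ, (A ^ k') j l * A l j = 0 := by
      intro l _
      have : A l j = 0 := le_antisymm (by have := hc l; omega) (h0 l j)
      rw [this, mul_zero]
    rw [Finset.sum_eq_zero this] at h1
    omega
  intro m hm
  induction m, hm using Nat.le_induction with
  | base => intro i j; have := hpos i j; omega
  | succ m hm ih =>
    intro i j
    obtain ⟨l₀, hl₀⟩ := hcol j
    rw [pow_succ, Matrix.mul_apply]
    calc (1:ℤ) ≤ (A ^ m) i l₀ * A l₀ j := by
          have h1 := ih i l₀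
          nlinarith
      _ ≤ ∑ l, (A ^ m) i l * A l j :=
          Finset.single_le_sum (fun l _ => mul_nonneg (powNonneg' A h0 m i l) (h0 l j))
            (Finset.mem_univ l₀)

private lemma sameRay_of_norm_sum' {ι : Type*} (s : Finset ι) (z : ι → ℂ)
    (h : ‖∑ j ∈ s, z j‖ = ∑ j ∈ s, ‖z j‖) :
    ∀ j ∈ s, SameRay ℝ (z j) (∑ j ∈ s, z j) := by
  classical
  induction s using Finset.induction_on with
  | empty => simp
  | @insert a t hat ih =>
    simp only [Finset.sum_insert hat] at h ⊢
    have h1 : ‖∑ j ∈ t, z j‖ ≤ ∑ j ∈ t, ‖z j‖ := norm_sum_le _ _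
    have h2 : ‖z a + ∑ j ∈ t, z j‖ ≤ ‖z a‖ + ‖∑ j ∈ t, z j‖ := norm_add_le _ _
    have hS : ‖∑ j ∈ t, z j‖ = ∑ j ∈ t, ‖z j‖ := by linarith
    have hadd : ‖z a + ∑ j ∈ t, z j‖ = ‖z a‖ + ‖∑ j ∈ t, z j‖ := by linarith
    have hray : SameRay ℝ (z a) (∑ j ∈ t, z j) := sameRay_iff_norm_add.2 hadd
    have ht := ih hS
    intro j hj
    rcases Finset.mem_insert.1 hj with rfl | hjt
    · exact SameRay.add_right (SameRay.refl _) hray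
    · refine ((ht j hjt).trans (SameRay.add_right hray.symm (SameRay.refl _)) ?_)
      intro hS0
      left
      rw [hS0, norm_zero] at hS
      have := (Finset.sum_eq_zero_iff_of_nonneg (fun i _ => norm_nonneg (z i))).1 hS.symm j hjt
      exact norm_eq_zero.1 this


private lemma evalCharpoly' {d : ℕ} (M : Matrix (Fin d) (Fin d) ℂ) (x : ℂ) :
    (Matrix.charpoly M).eval x = (x • (1 : Matrix (Fin d) (Fin d) ℂ) - M).det := by
  rw [Matrix.charpoly, ← Polynomial.coe_evalRingHom, RingHom.map_det]
  congr 1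
  ext i j
  by_cases h : i = j <;>
    simp [Matrix.charmatrix_apply, Matrix.one_apply, h, Matrix.diagonal_apply]

private lemma rootPow' {d : ℕ} (M : Matrix (Fin d) (Fin d) ℂ) (x : ℂ) (n : ℕ)
    (hx : (Matrix.charpoly M).eval x = 0) :
    (Matrix.charpoly (M ^ n)).eval (x ^ n) = 0 := by
  have hcomm : Commute (x • (1 : Matrix (Fin d) (Fin d) ℂ)) M :=
    (Commute.one_left M).smul_left x
  have hfac := hcomm.geom_sum₂_mul n
  rw [evalCharpoly'] at hx ⊢
  have : (x ^ n) • (1 : Matrix (Fin d) (Fin d) ℂ) - M ^ n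
      = (∑ i ∈ Finset.range n, (x • (1 : Matrix (Fin d) (Fin d) ℂ)) ^ i * M ^ (n - 1 - i)) *
        (x • (1 : Matrix (Fin d) (Fin d) ℂ) - M) := by
    rw [hfac, _root_.smul_pow, one_pow]
  rw [this, Matrix.det_mul, hx, mul_zero]


private lemma powEntryBound' {d : ℕ} (hd : 0 < d) (M : Matrix (Fin d) (Fin d) ℂ) (r : ℝ) (hr0 : 0 ≤ r)
    (hnd : (Matrix.charpoly M).roots.Nodup)
    (hcard : Multiset.card (Matrix.charpoly M).roots = d)
    (hr : ∀ θ ∈ (Matrix.charpoly M).roots, ‖θ‖ ≤ r) :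
    ∃ C : ℝ, 0 < C ∧ ∀ (t : ℕ) (i j : Fin d), ‖(M ^ t) i j‖ ≤ C * r ^ t := by
  classical
  set p := Matrix.charpoly M with hp
  have hmonic : p.Monic := Matrix.charpoly_monic M
  set s : Finset ℂ := p.roots.toFinset with hs
  have hscard : s.card = d := by
    rw [hs, Multiset.toFinset_card_of_nodup hnd, hcard]
  set E : ℂ → Matrix (Fin d) (Fin d) ℂ := fun θ => aeval M (Lagrange.basis s id θ) with hE
  refine ⟨1 + ∑ θ ∈ s, ∑ i, ∑ j, ‖E θ i j‖, by positivity, ?_⟩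
  intro t i j
  set R := (X : ℂ[X]) ^ t %ₘ p with hR
  have hdeg : R.degree < (s.card : ℕ) := by
    refine lt_of_lt_of_le (Polynomial.degree_modByMonic_lt _ hmonic) ?_
    rw [Polynomial.degree_eq_natDegree hmonic.ne_zero, hscard, hp,
      Matrix.charpoly_natDegree_eq_dim, Fintype.card_fin]
  have heval : ∀ θ ∈ s, R.eval (id θ) = θ ^ t := by
    intro θ hθ
    have hroot : p.eval θ = 0 :=
      Polynomial.isRoot_of_mem_roots (Multiset.mem_toFinset.1 hθ)
    have h := congrArg (Polynomial.eval θ) (Polynomial.modByMonic_add_div ((X : ℂ[X]) ^ t) p)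
    simpa [hroot] using h
  have hRi : R = Lagrange.interpolate s id (fun θ => θ ^ t) :=
    Lagrange.eq_interpolate_of_eval_eq _ (Set.injOn_id _) hdeg heval
  have hMt : M ^ t = ∑ θ ∈ s, (θ ^ t) • E θ := by
    have h1 : M ^ t = aeval M ((X : ℂ[X]) ^ t) := by simp
    rw [h1, ← Polynomial.modByMonic_add_div ((X : ℂ[X]) ^ t) p, map_add, _root_.map_mul,
      Matrix.aeval_self_charpoly, zero_mul, add_zero, ← hR, hRi, Lagrange.interpolate_apply,
      map_sum]
    refine Finset.sum_congr rfl fun θ hθ => ?_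
    rw [_root_.map_mul, aeval_C, ← Algebra.smul_def]
  have hb : ∀ θ ∈ s, ‖θ ^ t * E θ i j‖ ≤ r ^ t * ‖E θ i j‖ := by
    intro θ hθ
    rw [norm_mul, norm_pow]
    exact mul_le_mul_of_nonneg_right
      (pow_le_pow_left₀ (norm_nonneg _) (hr θ (Multiset.mem_toFinset.1 hθ)) t) (norm_nonneg _)
  calc ‖(M ^ t) i j‖ = ‖∑ θ ∈ s, θ ^ t * E θ i j‖ := by
        rw [hMt, Matrix.sum_apply]
        simp [smul_eq_mul]
    _ ≤ ∑ θ ∈ s, ‖θ ^ t * E θ i j‖ := norm_sum_le _ _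
    _ ≤ ∑ θ ∈ s, r ^ t * ‖E θ i j‖ := Finset.sum_le_sum hb
    _ = (∑ θ ∈ s, ‖E θ i j‖) * r ^ t := by rw [Finset.sum_mul]; exact Finset.sum_congr rfl fun θ _ => mul_comm _ _
    _ ≤ (1 + ∑ θ ∈ s, ∑ i', ∑ j', ‖E θ i' j'‖) * r ^ t := by
        refine mul_le_mul_of_nonneg_right ?_ (by positivity)
        have h1 : ∀ θ ∈ s, ‖E θ i j‖ ≤ ∑ i', ∑ j', ‖E θ i' j'‖ := by
          intro θ _
          calc ‖E θ i j‖ ≤ ∑ j', ‖E θ i j'‖ :=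
                Finset.single_le_sum (fun j' _ => norm_nonneg _) (Finset.mem_univ j)
            _ ≤ ∑ i', ∑ j', ‖E θ i' j'‖ :=
                Finset.single_le_sum (f := fun i' => ∑ j', ‖E θ i' j'‖)
                  (fun i' _ => Finset.sum_nonneg fun j' _ => norm_nonneg _) (Finset.mem_univ i)
        have := Finset.sum_le_sum h1
        linarith

private lemma mulVecPow' {d : ℕ} (M : Matrix (Fin d) (Fin d) ℂ) (v : Fin d → ℂ) (x : ℂ) (n : ℕ)
    (h : M.mulVec v = x • v) : (M ^ n).mulVec v = x ^ n • v := by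
  induction n with
  | zero => simp
  | succ n ih =>
    rw [pow_succ, ← Matrix.mulVec_mulVec, h, Matrix.mulVec_smul, ih, smul_smul, pow_succ']

private lemma perron {d : ℕ} (hd2 : 2 ≤ d) (A : Matrix (Fin d) (Fin d) ℤ)
    (h0 : ∀ i j, 0 ≤ A i j) (hprim : ∃ k : ℕ, ∀ i j, 0 < (A ^ k) i j)
    (hnd : (Matrix.charpoly (A.map (Int.castRingHom ℂ))).roots.Nodup) :
    ∃ r : ℝ, 0 < r ∧ ((r : ℂ) ∈ (Matrix.charpoly (A.map (Int.castRingHom ℂ))).roots) ∧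
      ∀ θ ∈ (Matrix.charpoly (A.map (Int.castRingHom ℂ))).roots, θ ≠ (r : ℂ) → ‖θ‖ < r := by
  classical
  obtain ⟨k, hposk⟩ := hprim
  set Ac := A.map (Int.castRingHom ℂ) with hAc
  have hd : 0 < d := by omega
  have hk1 : 1 ≤ k := by
    by_contra hcon
    obtain rfl : k = 0 := by omega
    have h01 : (⟨0, by omega⟩ : Fin d) ≠ (⟨1, by omega⟩ : Fin d) := by
      simp [Fin.ext_iff]
    have := hposk ⟨0, by omega⟩ ⟨1, by omega⟩
    rw [pow_zero, Matrix.one_apply_ne h01] at this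
    exact lt_irrefl 0 this
  have hone : ∀ m, k ≤ m → ∀ i j, 1 ≤ (A ^ m) i j := powOneLe' A h0 hk1 hposk
  have hpowmap : ∀ m : ℕ, (A ^ m).map (Int.castRingHom ℂ) = Ac ^ m := by
    intro m
    rw [hAc, ← RingHom.mapMatrix_apply, ← RingHom.mapMatrix_apply, map_pow]
  have hcast : ∀ (m : ℕ) i j, (Ac ^ m) i j = (((A ^ m) i j : ℤ) : ℂ) := by
    intro m i j
    rw [← hpowmap m]
    rfl
  have hent0 : ∀ (m : ℕ) i j, (0:ℝ) ≤ (((A ^ m) i j : ℤ) : ℝ) := by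
    intro m i j; exact_mod_cast powNonneg' A h0 m i j
  have hent1 : ∀ m, k ≤ m → ∀ i j, (1:ℝ) ≤ (((A ^ m) i j : ℤ) : ℝ) := by
    intro m hm i j; exact_mod_cast hone m hm i j
  have hnormcast : ∀ (m : ℕ) i j, ‖(Ac ^ m) i j‖ = (((A ^ m) i j : ℤ) : ℝ) := by
    intro m i j
    rw [hcast, Complex.norm_intCast]
    exact abs_of_nonneg (by exact_mod_cast powNonneg' A h0 m i j)
  -- roots
  have hpm : (Matrix.charpoly Ac).Monic := Matrix.charpoly_monic Ac
  have hdeg : (Matrix.charpoly Ac).natDegree = d := by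
    rw [Matrix.charpoly_natDegree_eq_dim, Fintype.card_fin]
  have hsplits : Splits (Matrix.charpoly Ac) := IsAlgClosed.splits _
  have hcard : Multiset.card (Matrix.charpoly Ac).roots = d := by
    exact (Polynomial.splits_iff_card_roots.1 hsplits).trans hdeg
  set s : Finset ℂ := (Matrix.charpoly Ac).roots.toFinset with hsdef
  have hscard : s.card = d := by rw [hsdef, Multiset.toFinset_card_of_nodup hnd, hcard]
  have hsne : s.Nonempty := by rw [← Finset.card_pos, hscard]; omega
  set r : ℝ := s.sup' hsne (fun θ => ‖θ‖) with hrdef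
  have hrge : ∀ θ ∈ s, ‖θ‖ ≤ r := fun θ hθ => Finset.le_sup' _ hθ
  obtain ⟨θmax, hθmaxmem, hθmaxeq⟩ := Finset.exists_mem_eq_sup' hsne (fun θ => ‖θ‖)
  have hr0 : 0 ≤ r := by rw [hrdef, hθmaxeq]; exact norm_nonneg _
  obtain ⟨C, hC0, hC⟩ := powEntryBound' hd Ac r hr0 hnd hcard
    (fun θ hθ => hrge θ (Multiset.mem_toFinset.2 hθ))
  have hrpos : 0 < r := by
    rcases lt_or_eq_of_le hr0 with h | h
    · exact h
    have i0 : Fin d := ⟨0, hd⟩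
    have h1 : (1:ℝ) ≤ ‖(Ac ^ k) i0 i0‖ := by
      rw [hnormcast]; exact hent1 k le_rfl i0 i0
    have h2 := hC k i0 i0
    rw [← h, zero_pow (by omega), mul_zero] at h2
    linarith
  -- the key uniqueness claim
  have key : ∀ θ₀ ∈ s, ‖θ₀‖ = r → θ₀ = (r : ℂ) := by
    intro θ₀ hθ₀s hθ₀r
    have hroot : (Matrix.charpoly Ac).eval θ₀ = 0 :=
      Polynomial.isRoot_of_mem_roots (Multiset.mem_toFinset.1 hθ₀s)
    have hdet : (θ₀ • (1 : Matrix (Fin d) (Fin d) ℂ) - Ac).det = 0 := by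
      rw [← evalCharpoly']; exact hroot
    obtain ⟨v, hv0, hv⟩ := (Matrix.exists_mulVec_eq_zero_iff).2 hdet
    have hv' : Ac.mulVec v = θ₀ • v := by
      rw [Matrix.sub_mulVec, sub_eq_zero] at hv
      rw [← hv, Matrix.smul_mulVec, Matrix.one_mulVec]
    have hvpow : ∀ m : ℕ, (Ac ^ m).mulVec v = θ₀ ^ m • v := fun m => mulVecPow' Ac v θ₀ m hv'
    set w : Fin d → ℝ := fun i => ‖v i‖ with hwdef
    obtain ⟨j₀, hj₀⟩ : ∃ j₀, v j₀ ≠ 0 := Function.ne_iff.1 hv0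
    have hwj₀ : 0 < w j₀ := norm_pos_iff.2 hj₀
    have hw0 : ∀ i, 0 ≤ w i := fun i => norm_nonneg _
    set S : ℕ → Fin d → ℝ := fun m i => ∑ j, (((A ^ m) i j : ℤ) : ℝ) * w j with hSdef
    have hmulVec : ∀ (m : ℕ) i, ((Ac ^ m).mulVec v) i = ∑ j, (((A ^ m) i j : ℤ) : ℂ) * v j := by
      intro m i
      rw [Matrix.mulVec, dotProduct]
      exact Finset.sum_congr rfl fun j _ => by rw [hcast]
    have hge : ∀ m, k ≤ m → ∀ i, r ^ m * w i ≤ S m i := by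
      intro m hm i
      have h1 : ‖((Ac ^ m).mulVec v) i‖ = r ^ m * w i := by
        rw [hvpow m]
        simp only [Pi.smul_apply, smul_eq_mul, norm_mul, norm_pow, hθ₀r, hwdef]
      rw [← h1, hmulVec]
      refine le_trans (norm_sum_le _ _) (Finset.sum_le_sum fun j _ => ?_)
      rw [norm_mul, Complex.norm_intCast, abs_of_nonneg (by exact_mod_cast powNonneg' A h0 m i j)]
    have heq : ∀ m, k ≤ m → ∀ i, S m i = r ^ m * w i := by
      intro m hm
      by_contra hcon
      push_neg at hcon
      obtain ⟨i₀, hi₀⟩ := hcon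
      have hlt : r ^ m * w i₀ < S m i₀ := lt_of_le_of_ne (hge m hm i₀) (Ne.symm hi₀)
      set δ : ℝ := S m i₀ - r ^ m * w i₀ with hδdef
      have hδ0 : 0 < δ := by rw [hδdef]; linarith
      have hu_pos : ∀ i, 0 < S m i := by
        intro i
        have h2 : (((A ^ m) i j₀ : ℤ) : ℝ) * w j₀ ≤ S m i :=
          Finset.single_le_sum (fun j _ => mul_nonneg (hent0 m i j) (hw0 j)) (Finset.mem_univ j₀)
        nlinarith [hent1 m hm i j₀]
      have hBu : ∀ i, r ^ m * S m i + δ ≤ ∑ j, (((A ^ m) i j : ℤ) : ℝ) * S m j := by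
        intro i
        have hsplit : ∑ j, (((A ^ m) i j : ℤ) : ℝ) * S m j
            = (∑ j, (((A ^ m) i j : ℤ) : ℝ) * (S m j - r ^ m * w j)) + r ^ m * S m i := by
          rw [Finset.mul_sum, ← Finset.sum_add_distrib]
          exact Finset.sum_congr rfl fun j _ => by ring
        have hterm : ∀ j ∈ Finset.univ, (0:ℝ) ≤ (((A ^ m) i j : ℤ) : ℝ) * (S m j - r ^ m * w j) :=
          fun j _ => mul_nonneg (hent0 m i j) (by have := hge m hm j; linarith)
        have hsingle : (((A ^ m) i i₀ : ℤ) : ℝ) * (S m i₀ - r ^ m * w i₀)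
            ≤ ∑ j, (((A ^ m) i j : ℤ) : ℝ) * (S m j - r ^ m * w j) :=
          Finset.single_le_sum hterm (Finset.mem_univ i₀)
        have h3 : δ ≤ (((A ^ m) i i₀ : ℤ) : ℝ) * (S m i₀ - r ^ m * w i₀) := by
          rw [hδdef]
          nlinarith [hent1 m hm i i₀]
        linarith
      have hUne : (Finset.univ : Finset (Fin d)).Nonempty := ⟨i₀, Finset.mem_univ i₀⟩
      set U : ℝ := Finset.univ.sup' hUne (S m) with hUdef
      have hU : ∀ i, S m i ≤ U := fun i => Finset.le_sup' _ (Finset.mem_univ i)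
      have hU0 : 0 < U := lt_of_lt_of_le (hu_pos i₀) (hU i₀)
      set ε : ℝ := δ / U with hεdef
      have hε0 : 0 < ε := div_pos hδ0 hU0
      have hstep : ∀ i, (r ^ m + ε) * S m i ≤ ∑ j, (((A ^ m) i j : ℤ) : ℝ) * S m j := by
        intro i
        have h2 : ε * S m i ≤ δ := by
          have := mul_le_mul_of_nonneg_left (hU i) hε0.le
          rw [hεdef] at this ⊢
          rw [div_mul_cancel₀ δ hU0.ne'] at this
          exact this
        have h3 := hBu i
        nlinarith
      have hiter : ∀ (t : ℕ) i, (r ^ m + ε) ^ t * S m i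
          ≤ ∑ j, (((A ^ (m * t)) i j : ℤ) : ℝ) * S m j := by
        intro t
        induction t with
        | zero =>
          intro i
          simp only [Nat.mul_zero, pow_zero, one_mul]
          have heq1 : ∀ j, (((1 : Matrix (Fin d) (Fin d) ℤ) i j : ℤ) : ℝ) * S m j
              = (if i = j then S m j else 0) := by
            intro j
            by_cases h : i = j <;> simp [Matrix.one_apply, h]
          rw [Finset.sum_congr rfl fun j _ => heq1 j, Finset.sum_ite_eq]
          simp
        | succ t ih =>
          intro i
          have hme : m * (t + 1) = m + m * t := by ring
          have hAsplit : (A : Matrix (Fin d) (Fin d) ℤ) ^ (m * (t+1)) = A ^ m * A ^ (m * t) := by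
            rw [hme, pow_add]
          have hexp : ∑ j, (((A ^ (m * (t+1))) i j : ℤ) : ℝ) * S m j
              = ∑ l, (((A ^ m) i l : ℤ) : ℝ) * ∑ j, (((A ^ (m * t)) l j : ℤ) : ℝ) * S m j := by
            rw [hAsplit]
            simp only [Matrix.mul_apply]
            push_cast
            simp only [Finset.sum_mul]
            rw [Finset.sum_comm]
            refine Finset.sum_congr rfl fun l _ => ?_
            rw [Finset.mul_sum]
            refine Finset.sum_congr rfl fun j _ => by ring
          rw [hexp]
          have h5 : ∀ l, (((A ^ m) i l : ℤ) : ℝ) * ((r ^ m + ε) ^ t * S m l)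
              ≤ (((A ^ m) i l : ℤ) : ℝ) * ∑ j, (((A ^ (m * t)) l j : ℤ) : ℝ) * S m j :=
            fun l => mul_le_mul_of_nonneg_left (ih l) (hent0 m i l)
          have h6 : (r ^ m + ε) ^ t * ((r ^ m + ε) * S m i)
              ≤ (r ^ m + ε) ^ t * ∑ j, (((A ^ m) i j : ℤ) : ℝ) * S m j :=
            mul_le_mul_of_nonneg_left (hstep i) (pow_nonneg (by positivity) t)
          calc (r ^ m + ε) ^ (t + 1) * S m i
              = (r ^ m + ε) ^ t * ((r ^ m + ε) * S m i) := by ring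
            _ ≤ (r ^ m + ε) ^ t * ∑ j, (((A ^ m) i j : ℤ) : ℝ) * S m j := h6
            _ = ∑ l, (((A ^ m) i l : ℤ) : ℝ) * ((r ^ m + ε) ^ t * S m l) := by
                rw [Finset.mul_sum]
                exact Finset.sum_congr rfl fun l _ => by ring
            _ ≤ ∑ l, (((A ^ m) i l : ℤ) : ℝ) * ∑ j, (((A ^ (m * t)) l j : ℤ) : ℝ) * S m j :=
                Finset.sum_le_sum fun l _ => h5 l
      have hupper : ∀ t : ℕ, ∑ j, (((A ^ (m * t)) i₀ j : ℤ) : ℝ) * S m j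
          ≤ C * r ^ (m * t) * ∑ j, S m j := by
        intro t
        rw [Finset.mul_sum]
        refine Finset.sum_le_sum fun j _ => ?_
        refine mul_le_mul_of_nonneg_right ?_ (hu_pos j).le
        rw [← hnormcast]
        exact hC (m * t) i₀ j
      have hcontra : ∀ t : ℕ, ((r ^ m + ε) / r ^ m) ^ t ≤ (C * ∑ j, S m j) / S m i₀ := by
        intro t
        have ha0 : (0:ℝ) < r ^ m := pow_pos hrpos m
        have h1 := le_trans (hiter t i₀) (hupper t)
        rw [div_pow, div_le_div_iff₀ (pow_pos ha0 t) (hu_pos i₀)]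
        calc (r ^ m + ε) ^ t * S m i₀ ≤ C * r ^ (m * t) * ∑ j, S m j := h1
          _ = (C * ∑ j, S m j) * (r ^ m) ^ t := by rw [pow_mul]; ring
      have hgt1 : (1:ℝ) < (r ^ m + ε) / r ^ m :=
        (one_lt_div (pow_pos hrpos m)).2 (by linarith)
      obtain ⟨t, ht⟩ := pow_unbounded_of_one_lt ((C * ∑ j, S m j) / S m i₀) hgt1
      exact absurd (hcontra t) (not_le.2 ht)
    -- positivity of w
    have hwpos : ∀ i, 0 < w i := by
      intro i
      by_contra hcon
      push_neg at hcon
      have h1 := heq k le_rfl i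
      have h2 : (((A ^ k) i j₀ : ℤ) : ℝ) * w j₀ ≤ S k i :=
        Finset.single_le_sum (fun j _ => mul_nonneg (hent0 k i j) (hw0 j)) (Finset.mem_univ j₀)
      have h3 : r ^ k * w i ≤ 0 := mul_nonpos_of_nonneg_of_nonpos (pow_pos hrpos k).le hcon
      have h4 : (1:ℝ) * w j₀ ≤ (((A ^ k) i j₀ : ℤ) : ℝ) * w j₀ :=
        mul_le_mul_of_nonneg_right (hent1 k le_rfl i j₀) (hw0 j₀)
      linarith
    -- alignment of the eigenvector
    have hsum1 : ∀ m : ℕ, (∑ j, (((A ^ m) j₀ j : ℤ) : ℂ) * v j) = θ₀ ^ m * v j₀ := by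
      intro m
      rw [← hmulVec m j₀, hvpow m]
      simp [smul_eq_mul]
    have hterm : ∀ (m : ℕ) j, ‖(((A ^ m) j₀ j : ℤ) : ℂ) * v j‖ = (((A ^ m) j₀ j : ℤ) : ℝ) * w j := by
      intro m j
      rw [norm_mul, Complex.norm_intCast,
        abs_of_nonneg (by exact_mod_cast powNonneg' A h0 m j₀ j)]
    have hnormsum : ‖∑ j, (((A ^ k) j₀ j : ℤ) : ℂ) * v j‖
        = ∑ j, ‖(((A ^ k) j₀ j : ℤ) : ℂ) * v j‖ := by
      rw [hsum1 k, norm_mul, norm_pow, hθ₀r, Finset.sum_congr rfl fun j _ => hterm k j]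
      exact (heq k le_rfl j₀).symm
    have hrays := sameRay_of_norm_sum' Finset.univ (fun j => (((A ^ k) j₀ j : ℤ) : ℂ) * v j)
      hnormsum
    set uu : ℂ := θ₀ ^ k * v j₀ with huudef
    have huunorm : ‖uu‖ = r ^ k * w j₀ := by rw [huudef, norm_mul, norm_pow, hθ₀r]
    have huu0 : uu ≠ 0 := by
      rw [← norm_pos_iff, huunorm]
      exact mul_pos (pow_pos hrpos k) hwj₀
    have hvj : ∀ j, (w j : ℂ) * uu = (‖uu‖ : ℂ) * v j := by
      intro j
      have hray := hrays j (Finset.mem_univ j)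
      rw [hsum1 k] at hray
      have hns := hray.norm_smul_eq
      rw [hterm k j, Complex.real_smul, Complex.real_smul] at hns
      push_cast at hns
      have hcZ : ((A ^ k) j₀ j : ℤ) ≠ 0 := by have := hone k le_rfl j₀ j; omega
      have hcC : ((((A ^ k) j₀ j : ℤ)) : ℂ) ≠ 0 := Int.cast_ne_zero.2 hcZ
      refine mul_left_cancel₀ hcC ?_
      linear_combination hns
    -- conclude θ₀ ^ m = r ^ m for all m ≥ k
    have hfin : ∀ m, k ≤ m → θ₀ ^ m = (r : ℂ) ^ m := by
      intro m hm
      have h1 := hsum1 m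
      have h2 := congrArg (fun x => (‖uu‖ : ℂ) * x) h1
      simp only [Finset.mul_sum] at h2
      have h3 : ∀ j, (‖uu‖ : ℂ) * ((((A ^ m) j₀ j : ℤ) : ℂ) * v j)
          = (((A ^ m) j₀ j : ℤ) : ℂ) * ((w j : ℂ) * uu) := by
        intro j
        rw [hvj j]
        ring
      rw [Finset.sum_congr rfl fun j _ => h3 j] at h2
      have h4 : ∑ j, (((A ^ m) j₀ j : ℤ) : ℂ) * ((w j : ℂ) * uu) = ((S m j₀ : ℝ) : ℂ) * uu := by
        have : ((S m j₀ : ℝ) : ℂ) = ∑ j, (((A ^ m) j₀ j : ℤ) : ℂ) * (w j : ℂ) := by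
          rw [hSdef]
          push_cast
          rfl
        rw [this, Finset.sum_mul]
        exact Finset.sum_congr rfl fun j _ => by ring
      rw [h4, heq m hm j₀] at h2
      have h5 : (w j₀ : ℂ) ≠ 0 := by
        simp only [ne_eq, Complex.ofReal_eq_zero]
        exact hwj₀.ne'
      have h6 : θ₀ ^ m * ((w j₀ : ℂ) * uu) = (r : ℂ) ^ m * ((w j₀ : ℂ) * uu) := by
        push_cast at h2
        linear_combination θ₀ ^ m * (hvj j₀) - h2
      exact mul_right_cancel₀ (mul_ne_zero h5 huu0) h6
    have h1 := hfin k le_rfl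
    have h2 := hfin (k + 1) (by omega)
    have h3 : (r : ℂ) ^ k * θ₀ = (r : ℂ) ^ k * (r : ℂ) := by
      calc (r : ℂ) ^ k * θ₀ = θ₀ ^ k * θ₀ := by rw [h1]
        _ = θ₀ ^ (k + 1) := (pow_succ θ₀ k).symm
        _ = (r : ℂ) ^ (k + 1) := h2
        _ = (r : ℂ) ^ k * (r : ℂ) := pow_succ _ _
    exact mul_left_cancel₀ (pow_ne_zero k (by exact_mod_cast hrpos.ne')) h3
  -- assemble the conclusion
  have hrs : (r : ℂ) ∈ s := by
    have h1 : θmax = (r : ℂ) := key θmax hθmaxmem (by rw [hrdef]; exact hθmaxeq.symm)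
    rwa [← h1]
  refine ⟨r, hrpos, Multiset.mem_toFinset.1 hrs, ?_⟩
  intro θ hθ hne
  have h1 : ‖θ‖ ≤ r := hrge θ (Multiset.mem_toFinset.2 hθ)
  rcases lt_or_eq_of_le h1 with h | h
  · exact h
  · exact absurd (key θ (Multiset.mem_toFinset.2 hθ) h) hne
theorem stmt1 (d : ℕ) (A : Matrix (Fin d) (Fin d) ℤ)
    (hnonneg : ∀ i j, 0 ≤ A i j)
    (hprim : ∃ k : ℕ, ∀ i j, 0 < (A ^ k) i j)
    (hirr : Irreducible ((Matrix.charpoly A).map (Int.castRingHom ℚ))) :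
    ∀ n : ℕ, 1 ≤ n →
      Irreducible ((Matrix.charpoly (A ^ n)).map (Int.castRingHom ℚ)) := by
  classical
  intro n hn
  have hPm : ((Matrix.charpoly (A ^ n)).map (Int.castRingHom ℚ)).Monic :=
    (Matrix.charpoly_monic (A ^ n)).map _
  -- d = 0 is impossible
  rcases Nat.eq_zero_or_pos d with rfl | hd
  · exfalso
    have h1 : Matrix.charpoly A = 1 := by
      rw [Matrix.charpoly, Matrix.det_isEmpty]
    rw [h1, Polynomial.map_one] at hirr
    exact hirr.not_isUnit isUnit_one
  have hPd : ((Matrix.charpoly (A ^ n)).map (Int.castRingHom ℚ)).natDegree = d := by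
    rw [(Matrix.charpoly_monic (A ^ n)).natDegree_map, Matrix.charpoly_natDegree_eq_dim,
      Fintype.card_fin]
  rcases eq_or_lt_of_le (Nat.succ_le_of_lt hd) with hd1 | hd2
  · -- d = 1 : any monic polynomial of degree one is irreducible
    have hdeg1 : ((Matrix.charpoly (A ^ n)).map (Int.castRingHom ℚ)).natDegree = 1 := by
      rw [hPd]; omega
    rw [hPm.eq_X_add_C hdeg1]
    have hx : (X : ℚ[X]) + Polynomial.C (((Matrix.charpoly (A ^ n)).map (Int.castRingHom ℚ)).coeff 0)
        = X - Polynomial.C (-(((Matrix.charpoly (A ^ n)).map (Int.castRingHom ℚ)).coeff 0)) := by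
      rw [map_neg, sub_neg_eq_add]
    rw [hx]
    exact Polynomial.irreducible_X_sub_C _
  -- main case : d ≥ 2
  have hd2' : 2 ≤ d := hd2
  set p : ℚ[X] := (Matrix.charpoly A).map (Int.castRingHom ℚ) with hpdef
  have hpm : p.Monic := (Matrix.charpoly_monic A).map _
  have hpd : p.natDegree = d := by
    rw [hpdef, (Matrix.charpoly_monic A).natDegree_map, Matrix.charpoly_natDegree_eq_dim,
      Fintype.card_fin]
  have hsep : p.Separable := hirr.separable
  set Ac := A.map (Int.castRingHom ℂ) with hAcdef
  have hcomp : (algebraMap ℚ ℂ).comp (Int.castRingHom ℚ) = Int.castRingHom ℂ :=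
    RingHom.ext_int _ _
  have hmapc : p.map (algebraMap ℚ ℂ) = Matrix.charpoly Ac := by
    rw [hpdef, Polynomial.map_map, hcomp, hAcdef, Matrix.charpoly_map]
  have hcp0 : Matrix.charpoly Ac ≠ 0 := (Matrix.charpoly_monic Ac).ne_zero
  have hndc : (Matrix.charpoly Ac).roots.Nodup := by
    rw [← hmapc]
    exact Polynomial.nodup_roots (hsep.map (f := algebraMap ℚ ℂ))
  obtain ⟨r, hr0, hrmem, hdom⟩ := perron hd2' A hnonneg hprim hndc
  have hmemroot : Polynomial.IsRoot (Matrix.charpoly Ac) ((r : ℝ) : ℂ) :=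
    Polynomial.isRoot_of_mem_roots hrmem
  have haeval : Polynomial.aeval ((r : ℂ)) p = 0 := by
    rw [Polynomial.aeval_def, Polynomial.eval₂_eq_eval_map, hmapc]
    exact hmemroot
  have hint : IsIntegral ℚ ((r : ℂ)) := ⟨p, hpm, by rwa [← Polynomial.aeval_def]⟩
  have hminp : minpoly ℚ ((r : ℂ)) = p := (minpoly.eq_of_irreducible_of_monic hirr haeval hpm).symm
  have hintn : IsIntegral ℚ ((r : ℂ) ^ n) := hint.pow n
  set K := IntermediateField.adjoin ℚ {((r : ℂ)) ^ n} with hK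
  haveI : CharZero K := charZero_of_injective_algebraMap (algebraMap ℚ K).injective
  have hxK : ((r : ℂ)) ^ n ∈ K := IntermediateField.mem_adjoin_simple_self ℚ _
  have hKint : IsIntegral K ((r : ℂ)) := IsIntegral.tower_top hint
  have hmem : (r : ℂ) ∈ (algebraMap K ℂ).range := by
    by_contra hnotmem
    have h2le : 2 ≤ (minpoly K ((r : ℂ))).natDegree :=
      (minpoly.two_le_natDegree_iff hKint).2 hnotmem
    set g := minpoly K ((r : ℂ)) with hgdef
    have hgirr : Irreducible g := minpoly.irreducible hKint
    have hgsep : g.Separable := hgirr.separable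
    set gc := g.map (algebraMap K ℂ) with hgcdef
    have hgc0 : gc ≠ 0 := Polynomial.map_ne_zero (minpoly.ne_zero hKint)
    have hgcnd : gc.roots.Nodup := Polynomial.nodup_roots (hgsep.map (f := algebraMap K ℂ))
    have hgccard : Multiset.card gc.roots = g.natDegree := by
      have h1 : Splits gc := IsAlgClosed.splits _
      rw [Polynomial.splits_iff_card_roots.1 h1, hgcdef,
        (minpoly.monic hKint).natDegree_map]
    have hgcroot : (r : ℂ) ∈ gc.roots := by
      rw [Polynomial.mem_roots hgc0]
      show Polynomial.eval ((r : ℂ)) gc = 0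
      rw [hgcdef, Polynomial.eval_map, ← Polynomial.aeval_def]
      exact minpoly.aeval K _
    obtain ⟨θ', hθ'e⟩ := Multiset.card_pos_iff_exists_mem.1
      (show 0 < Multiset.card (gc.roots.erase ((r : ℂ))) by
        rw [Multiset.card_erase_of_mem hgcroot, hgccard]
        exact Nat.sub_pos_of_lt (lt_of_lt_of_le one_lt_two h2le))
    have hθ'ne : θ' ≠ (r : ℂ) := ((Multiset.Nodup.mem_erase_iff hgcnd).1 hθ'e).1
    have hθ'roots : θ' ∈ gc.roots := ((Multiset.Nodup.mem_erase_iff hgcnd).1 hθ'e).2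
    have hθ'isroot : Polynomial.IsRoot gc θ' := (Polynomial.mem_roots hgc0).1 hθ'roots
    have hdvd1 : g ∣ p.map (algebraMap ℚ K) :=
      minpoly.dvd K _ (by rw [Polynomial.aeval_map_algebraMap]; exact haeval)
    have hdvd1c : gc ∣ Matrix.charpoly Ac := by
      rw [← hmapc]
      have h2 := Polynomial.map_dvd (algebraMap K ℂ) hdvd1
      rwa [Polynomial.map_map, ← IsScalarTower.algebraMap_eq] at h2
    have hθ'root : θ' ∈ (Matrix.charpoly Ac).roots := by
      rw [Polynomial.mem_roots hcp0]
      exact hθ'isroot.dvd hdvd1c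
    have hlt : ‖θ'‖ < r := hdom θ' hθ'root hθ'ne
    have hdvd2 : g ∣ (X ^ n - Polynomial.C (⟨(r : ℂ) ^ n, hxK⟩ : K)) := by
      refine minpoly.dvd K _ ?_
      have h3 : (algebraMap K ℂ) (⟨(r : ℂ) ^ n, hxK⟩ : K) = (r : ℂ) ^ n := rfl
      simp only [map_sub, map_pow, Polynomial.aeval_X, Polynomial.aeval_C, h3, sub_self]
    have hθ'pow : θ' ^ n = (r : ℂ) ^ n := by
      have hdvd2c : gc ∣ ((X : ℂ[X]) ^ n - Polynomial.C ((r : ℂ) ^ n)) := by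
        have h2 := Polynomial.map_dvd (algebraMap K ℂ) hdvd2
        rwa [Polynomial.map_sub, Polynomial.map_pow, Polynomial.map_X, Polynomial.map_C,
          show (algebraMap K ℂ) (⟨(r : ℂ) ^ n, hxK⟩ : K) = (r : ℂ) ^ n from rfl] at h2
      have h4 := hθ'isroot.dvd hdvd2c
      have h5 : θ' ^ n - (r : ℂ) ^ n = 0 := by simpa using h4
      exact sub_eq_zero.1 h5
    have hcontra : ‖θ' ^ n‖ < r ^ n := by
      rw [norm_pow]
      exact pow_lt_pow_left₀ hlt (norm_nonneg _) (by omega)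
    rw [hθ'pow, norm_pow, Complex.norm_real, Real.norm_eq_abs, abs_of_pos hr0] at hcontra
    exact lt_irrefl _ hcontra
  obtain ⟨y, hy⟩ := hmem
  set L := IntermediateField.adjoin ℚ {((r : ℂ))} with hL
  have hKL : K = L := by
    apply le_antisymm
    · rw [hK, IntermediateField.adjoin_simple_le_iff]
      exact pow_mem (IntermediateField.mem_adjoin_simple_self ℚ _) n
    · rw [hL, IntermediateField.adjoin_simple_le_iff]
      rw [← hy]
      exact y.2
  have hdegK : (minpoly ℚ ((r : ℂ) ^ n)).natDegree = d := by
    have h1 := IntermediateField.adjoin.finrank hintn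
    have h2 := IntermediateField.adjoin.finrank hint
    rw [hminp, hpd] at h2
    rw [← hK] at h1
    rw [← hL] at h2
    rw [hKL] at h1
    omega
  have hqirr : Irreducible (minpoly ℚ ((r : ℂ) ^ n)) := minpoly.irreducible hintn
  have hqm : (minpoly ℚ ((r : ℂ) ^ n)).Monic := minpoly.monic hintn
  have hmapc2 : ((Matrix.charpoly (A ^ n)).map (Int.castRingHom ℚ)).map (algebraMap ℚ ℂ)
      = Matrix.charpoly (Ac ^ n) := by
    rw [Polynomial.map_map, hcomp]
    have h1 : (A ^ n).map (Int.castRingHom ℂ) = Ac ^ n := by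
      rw [hAcdef, ← RingHom.mapMatrix_apply, ← RingHom.mapMatrix_apply, map_pow]
    rw [← h1, Matrix.charpoly_map]
  have haevalP : Polynomial.aeval ((r : ℂ) ^ n)
      ((Matrix.charpoly (A ^ n)).map (Int.castRingHom ℚ)) = 0 := by
    rw [Polynomial.aeval_def, Polynomial.eval₂_eq_eval_map, hmapc2]
    exact rootPow' Ac ((r : ℂ)) n hmemroot
  have hqdvd : minpoly ℚ ((r : ℂ) ^ n) ∣ (Matrix.charpoly (A ^ n)).map (Int.castRingHom ℚ) :=
    minpoly.dvd ℚ _ haevalP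
  obtain ⟨c, hc⟩ := hqdvd
  have hc0 : c ≠ 0 := by
    rintro rfl
    rw [mul_zero] at hc
    exact hPm.ne_zero hc
  have hdegc : c.natDegree = 0 := by
    have h1 := Polynomial.natDegree_mul (minpoly.ne_zero hintn) hc0
    rw [← hc, hPd, hdegK] at h1
    omega
  obtain ⟨a, rfl⟩ := Polynomial.natDegree_eq_zero.1 hdegc
  have ha : a = 1 := by
    have h1 := hPm
    rw [hc] at h1
    have h2 := h1.leadingCoeff
    rw [Polynomial.leadingCoeff_mul, hqm.leadingCoeff, one_mul,
      Polynomial.leadingCoeff_C] at h2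
    exact h2
  rw [hc, ha, Polynomial.C_1, mul_one]
  exact hqirr
end

section
/- For every integer n ≥ 1, the largest real root θ₁ of p_n(x) = x⁴ − (n+6)x³ + (10+n)x² − (n+6)x + 1 is a Salem number: θ₁ > 1, 1/θ₁ is a root, and all other roots of p_n lie on the unit circle (and there is at least one root on the unit circle). -/
set_option maxHeartbeats 1000000

theorem stmt12 (n : ℕ) (hn : 1 ≤ n) :
    ∃ θ : ℝ, 1 < θ ∧
      (θ ^ 4 - (n + 6) * θ ^ 3 + (10 + n) * θ ^ 2 - (n + 6) * θ + 1 = 0) ∧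
      ((1/θ) ^ 4 - (n + 6) * (1/θ) ^ 3 + (10 + n) * (1/θ) ^ 2 - (n + 6) * (1/θ) + 1 = 0) ∧
      (∀ x : ℝ, x ^ 4 - (n + 6) * x ^ 3 + (10 + n) * x ^ 2 - (n + 6) * x + 1 = 0 → x ≤ θ) ∧
      (∀ z : ℂ, z ^ 4 - (n + 6) * z ^ 3 + (10 + n) * z ^ 2 - (n + 6) * z + 1 = 0 →
        z ≠ (θ : ℂ) → z ≠ ((1/θ : ℝ) : ℂ) → ‖z‖ = 1) ∧
      (∃ z : ℂ, z ^ 4 - (n + 6) * z ^ 3 + (10 + n) * z ^ 2 - (n + 6) * z + 1 = 0 ∧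
        ‖z‖ = 1) := by
  set m : ℝ := (n : ℝ) with hm_def
  have hm : 1 ≤ m := by rw [hm_def]; exact_mod_cast hn
  -- discriminant of the quadratic in y
  set sD : ℝ := Real.sqrt (m^2 + 8*m + 4) with hsD_def
  have hDnn : (0:ℝ) ≤ m^2 + 8*m + 4 := by nlinarith
  have hsD_sq : sD^2 = m^2 + 8*m + 4 := Real.sq_sqrt hDnn
  have hsD_nn : 0 ≤ sD := Real.sqrt_nonneg _
  have hsD_lb : m + 2 < sD := by nlinarith [sq_nonneg (sD - (m+2))]
  have hsD_ub : sD < m + 6 := by nlinarith [sq_nonneg (sD - (m+6))]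
  set yp : ℝ := (m + 6 + sD)/2 with hyp_def
  set ym : ℝ := (m + 6 - sD)/2 with hym_def
  have hyp_gt : 2 < yp := by simp only [hyp_def]; nlinarith
  have hym0 : 0 < ym := by simp only [hym_def]; nlinarith
  have hym2 : ym < 2 := by simp only [hym_def]; nlinarith
  have hsum : yp + ym = m + 6 := by simp only [hyp_def, hym_def]; ring
  have hprod : yp * ym = m + 8 := by
    simp only [hyp_def, hym_def]; nlinarith [hsD_sq]
  -- theta
  set sE : ℝ := Real.sqrt (yp^2 - 4) with hsE_def
  have hEnn : (0:ℝ) ≤ yp^2 - 4 := by nlinarith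
  have hsE_sq : sE^2 = yp^2 - 4 := Real.sq_sqrt hEnn
  have hsE_nn : 0 ≤ sE := Real.sqrt_nonneg _
  set θ : ℝ := (yp + sE)/2 with hθ_def
  have hθ1 : 1 < θ := by simp only [hθ_def]; nlinarith
  have hθ0 : θ ≠ 0 := by positivity
  have hθq : θ^2 - yp*θ + 1 = 0 := by
    simp only [hθ_def]; nlinarith [hsE_sq]
  have hinv : 1/θ = yp - θ := by
    rw [div_eq_iff hθ0]
    linear_combination hθq
  -- real factorization
  have hfac : ∀ x : ℝ, x^4 - (m+6)*x^3 + (10+m)*x^2 - (m+6)*x + 1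
      = (x^2 - yp*x + 1) * (x^2 - ym*x + 1) := by
    intro x
    linear_combination (-(x^3) - x) * hsum + (-(x^2)) * hprod
  refine ⟨θ, hθ1, ?_, ?_, ?_, ?_, ?_⟩
  · rw [hfac θ, hθq]; ring
  · rw [hfac (1/θ)]
    have : (1/θ)^2 - yp*(1/θ) + 1 = 0 := by
      rw [hinv]; nlinarith [hθq]
    rw [this]; ring
  · intro x hx
    rw [hfac x] at hx
    rcases mul_eq_zero.1 hx with h | h
    · by_contra hcon
      push_neg at hcon
      simp only [hθ_def] at hcon
      nlinarith [hsE_sq, mul_pos (by nlinarith : (0:ℝ) < x - yp/2 - sE/2) (by nlinarith : (0:ℝ) < x - yp/2 + sE/2)]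
    · nlinarith [sq_nonneg (x - ym/2)]
  · intro z hz hz1 hz2
    have hfacC : z^4 - ((m:ℂ)+6)*z^3 + (10+(m:ℂ))*z^2 - ((m:ℂ)+6)*z + 1
        = (z^2 - (yp:ℂ)*z + 1) * (z^2 - (ym:ℂ)*z + 1) := by
      have h1 : ((yp:ℂ) + (ym:ℂ)) = (m:ℂ) + 6 := by exact_mod_cast congrArg (Complex.ofReal) hsum
      have h2 : ((yp:ℂ) * (ym:ℂ)) = (m:ℂ) + 8 := by exact_mod_cast congrArg (Complex.ofReal) hprod
      linear_combination (z^3 + z) * h1 - (z^2) * h2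
    have hzC : (z^2 - (yp:ℂ)*z + 1) * (z^2 - (ym:ℂ)*z + 1) = 0 := by
      rw [← hfacC]
      have : ((n:ℂ)) = ((m:ℝ):ℂ) := by push_cast [hm_def]; ring
      rw [← this] at *
      convert hz using 2 <;> push_cast <;> ring
    rcases mul_eq_zero.1 hzC with h | h
    · exfalso
      have hθC : (θ:ℂ)^2 - (yp:ℂ)*(θ:ℂ) + 1 = 0 := by exact_mod_cast congrArg (Complex.ofReal) hθq
      have : (z - (θ:ℂ)) * (z - ((yp:ℂ) - (θ:ℂ))) = 0 := by
        linear_combination h - hθC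
      rcases mul_eq_zero.1 this with h' | h'
      · exact hz1 (by linear_combination h')
      · apply hz2
        have : ((1/θ : ℝ):ℂ) = (yp:ℂ) - (θ:ℂ) := by exact_mod_cast congrArg (Complex.ofReal) hinv
        rw [this]; linear_combination h'
    · -- on unit circle
      set s : ℝ := Real.sqrt (4 - ym^2) with hs_def
      have hs_sq : s^2 = 4 - ym^2 := Real.sq_sqrt (by nlinarith)
      have hI : ((s:ℂ)*Complex.I)^2 = (ym:ℂ)^2 - 4 := by
        have : ((s:ℂ))^2 = ((4 - ym^2 : ℝ):ℂ) := by exact_mod_cast congrArg (Complex.ofReal) hs_sq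
        rw [mul_pow, this, Complex.I_sq]; push_cast; ring
      have hsplit : (2*z - (ym:ℂ) - (s:ℂ)*Complex.I) * (2*z - (ym:ℂ) + (s:ℂ)*Complex.I) = 0 := by
        linear_combination 4 * h - hI
      have habs : ∀ b : ℝ, z = ((ym/2 : ℝ):ℂ) + ((b:ℝ):ℂ) * Complex.I → b^2 = s^2/4 → ‖z‖ = 1 := by
        intro b hzb hb
        rw [hzb]
        rw [Complex.norm_def, Complex.normSq_add_mul_I]
        rw [show (ym/2)^2 + b^2 = 1 by nlinarith]
        exact Real.sqrt_one
      rcases mul_eq_zero.1 hsplit with h' | h'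
      · refine habs (s/2) ?_ (by ring)
        have : (2:ℂ) ≠ 0 := two_ne_zero
        field_simp
        push_cast
        linear_combination (1/2:ℂ) * h'
      · refine habs (-(s/2)) ?_ (by ring)
        field_simp
        push_cast
        linear_combination (1/2:ℂ) * h'
  · -- exhibit a root on unit circle
    set s : ℝ := Real.sqrt (4 - ym^2) with hs_def
    have hs_sq : s^2 = 4 - ym^2 := Real.sq_sqrt (by nlinarith)
    refine ⟨((ym/2 : ℝ):ℂ) + ((s/2 : ℝ):ℂ) * Complex.I, ?_, ?_⟩
    · set z : ℂ := ((ym/2 : ℝ):ℂ) + ((s/2 : ℝ):ℂ) * Complex.I with hz_def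
      have hq : z^2 - (ym:ℂ)*z + 1 = 0 := by
        have hs2 : ((s:ℂ))^2 = 4 - ((ym:ℂ))^2 := by exact_mod_cast congrArg (Complex.ofReal) hs_sq
        simp only [hz_def]
        push_cast
        linear_combination ((s:ℂ)^2/4) * Complex.I_sq - (1/4:ℂ) * hs2
      have hfacC : z^4 - ((m:ℂ)+6)*z^3 + (10+(m:ℂ))*z^2 - ((m:ℂ)+6)*z + 1
          = (z^2 - (yp:ℂ)*z + 1) * (z^2 - (ym:ℂ)*z + 1) := by
        have h1 : ((yp:ℂ) + (ym:ℂ)) = (m:ℂ) + 6 := by exact_mod_cast congrArg (Complex.ofReal) hsum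
        have h2 : ((yp:ℂ) * (ym:ℂ)) = (m:ℂ) + 8 := by exact_mod_cast congrArg (Complex.ofReal) hprod
        linear_combination (z^3 + z) * h1 - (z^2) * h2
      have : ((n:ℂ)) = ((m:ℝ):ℂ) := by push_cast [hm_def]; ring
      rw [this]
      calc z ^ 4 - (((m:ℝ):ℂ) + 6) * z ^ 3 + (10 + ((m:ℝ):ℂ)) * z ^ 2 - (((m:ℝ):ℂ) + 6) * z + 1
          = (z^2 - (yp:ℂ)*z + 1) * (z^2 - (ym:ℂ)*z + 1) := hfacC
        _ = 0 := by rw [hq]; ring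
    · rw [Complex.norm_def, Complex.normSq_add_mul_I]
      rw [show (ym/2)^2 + (s/2)^2 = 1 by nlinarith]
      exact Real.sqrt_one
end

section
/- Let θ₁ ∈ (m, m+1) be the Perron–Frobenius root of p(x) = x³ − (m+1)x² + (m−2)x + m for an integer m ≥ 3. Then p has three real roots: one in (m, m+1), one in (1, 2), and one in (−1, 0), and p is irreducible over ℚ. -/
open Polynomial

-- the real polynomial as a function
private lemma f_cont (m : ℝ) : Continuous (fun x : ℝ => x ^ 3 - (m + 1) * x ^ 2 + (m - 2) * x + m) := by
  continuity

private lemma natDegree_aux (m : ℚ) :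
    ((X ^ 3 - C (m + 1) * X ^ 2 + C (m - 2) * X + C m : Polynomial ℚ)).natDegree = 3 := by
  compute_degree!

private lemma natDegree_auxR (m : ℝ) :
    ((X ^ 3 - C (m + 1) * X ^ 2 + C (m - 2) * X + C m : Polynomial ℝ)).natDegree = 3 := by
  compute_degree!

theorem stmt19 (m : ℕ) (hm : 3 ≤ m) :
    (∃ r₁ ∈ Set.Ioo (m : ℝ) (m + 1), ∃ r₂ ∈ Set.Ioo (1 : ℝ) 2, ∃ r₃ ∈ Set.Ioo (-1 : ℝ) 0,
      (r₁ ^ 3 - (m + 1) * r₁ ^ 2 + (m - 2) * r₁ + m = 0) ∧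
      (r₂ ^ 3 - (m + 1) * r₂ ^ 2 + (m - 2) * r₂ + m = 0) ∧
      (r₃ ^ 3 - (m + 1) * r₃ ^ 2 + (m - 2) * r₃ + m = 0) ∧
      (∀ x : ℝ, x ^ 3 - (m + 1) * x ^ 2 + (m - 2) * x + m = 0 →
        x = r₁ ∨ x = r₂ ∨ x = r₃)) ∧
    Irreducible ((X ^ 3 - C ((m : ℚ) + 1) * X ^ 2 + C ((m : ℚ) - 2) * X + C (m : ℚ) :
      Polynomial ℚ)) := by
  have hm3 : (3 : ℝ) ≤ (m : ℝ) := by exact_mod_cast hm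
  set f : ℝ → ℝ := fun x => x ^ 3 - ((m : ℝ) + 1) * x ^ 2 + ((m : ℝ) - 2) * x + (m : ℝ) with hf
  have hcont : Continuous f := f_cont _
  have hfneg1 : f (-1) = -(m : ℝ) := by simp only [hf]; ring
  have hf0 : f 0 = (m : ℝ) := by simp only [hf]; ring
  have hf1 : f 1 = (m : ℝ) - 2 := by simp only [hf]; ring
  have hf2 : f 2 = -(m : ℝ) := by simp only [hf]; ring
  have hfm : f m = -(m : ℝ) := by simp only [hf]; ring
  have hfm1 : f ((m : ℝ) + 1) = (m : ℝ) ^ 2 - 2 := by simp only [hf]; ring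
  have hmpos : (0 : ℝ) < m := by linarith
  -- root in (m, m+1)
  obtain ⟨r₁, hr₁mem, hr₁⟩ : ∃ r ∈ Set.Ioo (m : ℝ) (m + 1), f r = 0 := by
    have := intermediate_value_Ioo (by linarith : (m : ℝ) ≤ m + 1) hcont.continuousOn
    have h0 : (0 : ℝ) ∈ Set.Ioo (f m) (f ((m:ℝ)+1)) := by
      rw [hfm, hfm1]; constructor <;> nlinarith
    obtain ⟨r, hr, hre⟩ := this h0
    exact ⟨r, hr, hre⟩
  obtain ⟨r₂, hr₂mem, hr₂⟩ : ∃ r ∈ Set.Ioo (1 : ℝ) 2, f r = 0 := by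
    have := intermediate_value_Ioo' (by norm_num : (1 : ℝ) ≤ 2) hcont.continuousOn
    have h0 : (0 : ℝ) ∈ Set.Ioo (f 2) (f 1) := by rw [hf1, hf2]; constructor <;> linarith
    obtain ⟨r, hr, hre⟩ := this h0
    exact ⟨r, hr, hre⟩
  obtain ⟨r₃, hr₃mem, hr₃⟩ : ∃ r ∈ Set.Ioo (-1 : ℝ) 0, f r = 0 := by
    have := intermediate_value_Ioo (by norm_num : (-1 : ℝ) ≤ 0) hcont.continuousOn
    have h0 : (0 : ℝ) ∈ Set.Ioo (f (-1)) (f 0) := by rw [hfneg1, hf0]; constructor <;> linarith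
    obtain ⟨r, hr, hre⟩ := this h0
    exact ⟨r, hr, hre⟩
  -- ordering
  have hord : r₃ < r₂ ∧ r₂ < r₁ := by
    obtain ⟨h1, h2⟩ := hr₁mem; obtain ⟨h3, h4⟩ := hr₂mem; obtain ⟨h5, h6⟩ := hr₃mem
    constructor <;> linarith
  -- real polynomial
  set P : Polynomial ℝ := X ^ 3 - C ((m : ℝ) + 1) * X ^ 2 + C ((m : ℝ) - 2) * X + C (m : ℝ) with hP
  have hPeval : ∀ x : ℝ, P.eval x = f x := by intro x; simp [hP, hf]
  have hPdeg : P.natDegree = 3 := natDegree_auxR _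
  have hPne : P ≠ 0 := fun h => by simp [h] at hPdeg
  have huniq : ∀ x : ℝ, f x = 0 → x = r₁ ∨ x = r₂ ∨ x = r₃ := by
    intro x hx
    by_contra hc
    push_neg at hc
    obtain ⟨hx1, hx2, hx3⟩ := hc
    have hsub : ({x, r₁, r₂, r₃} : Finset ℝ) ⊆ P.roots.toFinset := by
      intro y hy
      simp only [Finset.mem_insert, Finset.mem_singleton] at hy
      rw [Multiset.mem_toFinset, mem_roots hPne]
      rcases hy with rfl | rfl | rfl | rfl <;>
        simp only [IsRoot, hPeval, hx, hr₁, hr₂, hr₃]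
    have hcard : ({x, r₁, r₂, r₃} : Finset ℝ).card = 4 := by
      rw [Finset.card_insert_of_notMem, Finset.card_insert_of_notMem,
        Finset.card_insert_of_notMem, Finset.card_singleton]
      · simp only [Finset.mem_singleton]; linarith [hord.1, hord.2]
      · simp only [Finset.mem_insert, Finset.mem_singleton]
        push_neg; constructor <;> linarith [hord.1, hord.2]
      · simp only [Finset.mem_insert, Finset.mem_singleton]
        push_neg; exact ⟨hx1, hx2, hx3⟩
    have h4 : 4 ≤ P.roots.toFinset.card := hcard ▸ Finset.card_le_card hsub
    have h5 : P.roots.toFinset.card ≤ P.roots.card := Multiset.toFinset_card_le _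
    have h6 : P.roots.card ≤ 3 := hPdeg ▸ P.card_roots' 
    omega
  refine ⟨⟨r₁, hr₁mem, r₂, hr₂mem, r₃, hr₃mem, hr₁, hr₂, hr₃, huniq⟩, ?_⟩
  -- irreducibility
  set Q : Polynomial ℚ := X ^ 3 - C ((m : ℚ) + 1) * X ^ 2 + C ((m : ℚ) - 2) * X + C (m : ℚ) with hQ
  have hQdeg : Q.natDegree = 3 := natDegree_aux _
  have hQne : Q ≠ 0 := fun h => by simp [h] at hQdeg
  rw [irreducible_iff_roots_eq_zero_of_degree_le_three (by omega) (by omega)]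
  rw [Multiset.eq_zero_iff_forall_notMem]
  intro q hq
  rw [mem_roots hQne] at hq
  have hqe : q ^ 3 - ((m : ℚ) + 1) * q ^ 2 + ((m : ℚ) - 2) * q + (m : ℚ) = 0 := by
    have := hq
    simp only [IsRoot, hQ, eval_add, eval_sub, eval_mul, eval_pow, eval_X, eval_C] at this
    linarith [this]
  -- q is an integer by the rational root theorem
  have hZmonic : (X ^ 3 - C ((m : ℤ) + 1) * X ^ 2 + C ((m : ℤ) - 2) * X + C (m : ℤ)).Monic := by
    monicity!
  set Z : Polynomial ℤ := X ^ 3 - C ((m : ℤ) + 1) * X ^ 2 + C ((m : ℤ) - 2) * X + C (m : ℤ) with hZ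
  have hZroot : Polynomial.aeval q Z = 0 := by
    simp only [hZ, map_add, map_sub, map_mul, map_pow, aeval_X, aeval_C,
      algebraMap_int_eq, eq_intCast, Int.cast_add, Int.cast_sub, Int.cast_one,
      Int.cast_ofNat, Int.cast_natCast, map_natCast, map_one, map_ofNat]
    push_cast
    linarith [hqe]
  obtain ⟨n, hn⟩ := isInteger_of_is_root_of_monic hZmonic hZroot
  -- n : ℤ, algebraMap ℤ ℚ n = q
  have hqn : q = (n : ℚ) := by rw [← hn]; simp
  -- cast to ℝ
  have hroot : f ((n : ℝ)) = 0 := by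
    have : (n : ℚ) ^ 3 - ((m : ℚ) + 1) * (n : ℚ) ^ 2 + ((m : ℚ) - 2) * (n : ℚ) + (m : ℚ) = 0 := by
      rw [← hqn]; exact hqe
    have := congrArg (fun x : ℚ => (x : ℝ)) this
    push_cast at this
    simpa [hf] using this
  rcases huniq _ hroot with h | h | h
  · obtain ⟨ha, hb⟩ := hr₁mem
    rw [← h] at ha hb
    have h1 : (m : ℤ) < n := by exact_mod_cast ha
    have h2 : (n : ℝ) < (m : ℤ) + 1 := by push_cast; linarith
    have h3 : n < (m : ℤ) + 1 := by exact_mod_cast h2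
    omega
  · obtain ⟨ha, hb⟩ := hr₂mem
    rw [← h] at ha hb
    have h1 : (1 : ℤ) < n := by exact_mod_cast ha
    have h2 : n < (2 : ℤ) := by exact_mod_cast hb
    omega
  · obtain ⟨ha, hb⟩ := hr₃mem
    rw [← h] at ha hb
    have h1 : (-1 : ℤ) < n := by exact_mod_cast ha
    have h2 : n < (0 : ℤ) := by exact_mod_cast hb
    omega
end
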